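/- For any k ≥ 1, any vectors v_1, …, v_k : σ → k and any polynomial p ∈ MvPolynomial σ k, one has constantCoeff (∂_{v_1}(∂_{v_2}(⋯(∂_{v_k} p)))) = k! · constantCoeff (∂̂_{v_1}(∂̂_{v_2}(⋯(∂̂_{v_k} p)))); that is, evaluating the k-fold iterated directional derivative at 0 equals k! times the evaluation at 0 of the k-fold iterated corrected derivative. -/

import Mathlib

open MvPolynomial

variable {k : Type*} [Field k] [CharZero k] {σ : Type*} [Fintype σ]

/-- The directional derivative `∂_v = Σ_i v i • ∂/∂x_i` on `MvPolynomial σ k`. -/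
noncomputable def dirD (v : σ → k) (p : MvPolynomial σ k) : MvPolynomial σ k :=
  ∑ i : σ, v i • pderiv i p

/-- The corrected partial derivative `∂̂_v`: it acts on the homogeneous component of
degree `j ≥ 1` as `(1/j)·∂_v` and kills constants (the `j = 0` summand below vanishes,
since `(0 : k)⁻¹ = 0`). -/
noncomputable def hatD (v : σ → k) (p : MvPolynomial σ k) : MvPolynomial σ k :=
  ∑ᶠ j : ℕ, ((j : k)⁻¹) • dirD v (homogeneousComponent j p)

private lemma degree_add' (a b : σ →₀ ℕ) :
    (a + b).degree = a.degree + b.degree := by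
  simp [Finsupp.degree_eq_weight_one, map_add]

private lemma pderiv_isHomogeneous {p : MvPolynomial σ k} {n : ℕ}
    (hp : p.IsHomogeneous n) (i : σ) : (pderiv i p).IsHomogeneous (n - 1) := by
  classical
  have hdeg : ∀ d ∈ p.support, (d : σ →₀ ℕ).degree = n := by
    intro d hd
    by_contra h
    exact (mem_support_iff.mp hd) (hp.coeff_eq_zero h)
  rw [p.as_sum, map_sum]
  apply IsHomogeneous.sum
  intro d hd
  rw [pderiv_monomial]
  by_cases hdi : d i = 0
  · rw [hdi]
    simp only [Nat.cast_zero, mul_zero, map_zero]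
    exact isHomogeneous_zero _ _ _
  · apply isHomogeneous_monomial
    have hle : Finsupp.single i 1 ≤ d := by
      rw [Finsupp.single_le_iff]
      omega
    have hsum : (d - Finsupp.single i 1) + Finsupp.single i 1 = d :=
      tsub_add_cancel_of_le hle
    have hds : Finsupp.degree (Finsupp.single i (1 : ℕ)) = 1 := by
      exact Finsupp.degree_single i 1
    have := degree_add' (d - Finsupp.single i 1) (Finsupp.single i 1)
    rw [hsum, hds] at this
    have hdn := hdeg d hd
    omega

private lemma dirD_isHomogeneous {p : MvPolynomial σ k} {n : ℕ}
    (hp : p.IsHomogeneous n) (v : σ → k) : (dirD v p).IsHomogeneous (n - 1) := by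
  apply IsHomogeneous.sum
  intro i _
  rw [← mem_homogeneousSubmodule]
  exact Submodule.smul_mem _ _ ((mem_homogeneousSubmodule _ _).mpr
    (pderiv_isHomogeneous hp i))

private lemma pderiv_eq_zero_of_isHomogeneous_zero {p : MvPolynomial σ k}
    (hp : p.IsHomogeneous 0) (i : σ) : pderiv i p = 0 := by
  classical
  have hzero : ∀ m ∈ p.support, ∀ x : σ, m x = 0 := by
    intro m hm x
    have hd0 : m.degree = 0 := by
      by_contra h
      exact mem_support_iff.mp hm (hp.coeff_eq_zero h)
    rw [Finsupp.degree_eq_zero_iff] at hd0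
    simp [hd0]
  rw [p.as_sum, map_sum]
  apply Finset.sum_eq_zero
  intro d hd
  rw [pderiv_monomial, hzero d hd i, Nat.cast_zero, mul_zero, map_zero]

private lemma dirD_eq_zero_of_isHomogeneous_zero {p : MvPolynomial σ k}
    (hp : p.IsHomogeneous 0) (v : σ → k) : dirD v p = 0 := by
  unfold dirD
  apply Finset.sum_eq_zero
  intro i _
  rw [pderiv_eq_zero_of_isHomogeneous_zero hp i, smul_zero]

private lemma dirD_zero (v : σ → k) : dirD v 0 = 0 := by
  simp [dirD]

private lemma dirD_add (v : σ → k) (a b : MvPolynomial σ k) :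
    dirD v (a + b) = dirD v a + dirD v b := by
  simp [dirD, map_add, smul_add, Finset.sum_add_distrib]

private lemma dirD_smul (v : σ → k) (c : k) (a : MvPolynomial σ k) :
    dirD v (c • a) = c • dirD v a := by
  simp only [dirD, Derivation.map_smul, Finset.smul_sum, smul_comm c]

private lemma hatD_support_finite (v : σ → k) (a : MvPolynomial σ k) :
    (Function.support fun j : ℕ =>
      ((j : k)⁻¹) • dirD v (homogeneousComponent j a)).Finite := by
  apply Set.Finite.subset (Set.finite_Iic a.totalDegree)
  intro j hj
  simp only [Function.mem_support] at hj
  by_contra h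
  simp only [Set.mem_Iic, not_le] at h
  rw [homogeneousComponent_eq_zero _ _ h, dirD_zero, smul_zero] at hj
  exact hj rfl

private lemma hatD_add (v : σ → k) (a b : MvPolynomial σ k) :
    hatD v (a + b) = hatD v a + hatD v b := by
  unfold hatD
  rw [← finsum_add_distrib (hatD_support_finite v a) (hatD_support_finite v b)]
  apply finsum_congr
  intro j
  rw [map_add, dirD_add, smul_add]

private lemma hatD_smul (v : σ → k) (c : k) (a : MvPolynomial σ k) :
    hatD v (c • a) = c • hatD v a := by
  unfold hatD
  rw [smul_finsum]
  apply finsum_congr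
  intro j
  rw [map_smul, dirD_smul, smul_comm]

private lemma hatD_of_isHomogeneous {p : MvPolynomial σ k} {n : ℕ}
    (hp : p.IsHomogeneous n) (v : σ → k) :
    hatD v p = ((n : k))⁻¹ • dirD v p := by
  unfold hatD
  rw [finsum_eq_single _ n]
  · rw [homogeneousComponent_of_mem ((mem_homogeneousSubmodule _ _).mpr hp),
      if_pos rfl]
  · intro m hm
    rw [homogeneousComponent_of_mem ((mem_homogeneousSubmodule _ _).mpr hp),
      if_neg hm, dirD_zero, smul_zero]

private lemma key_lemma (l : List (σ → k)) :
    ∀ (n : ℕ) (p : MvPolynomial σ k), p.IsHomogeneous n →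
      (l.foldr dirD p).IsHomogeneous (n - l.length) ∧
      (n < l.length → l.foldr dirD p = 0) ∧
      l.foldr hatD p = ((n.descFactorial l.length : k))⁻¹ • l.foldr dirD p := by
  induction l with
  | nil =>
    intro n p hp
    refine ⟨by simpa using hp, fun h => absurd h (by simp), by simp⟩
  | cons v t ih =>
    intro n p hp
    obtain ⟨h1, h2, h3⟩ := ih n p hp
    have hfold : (v :: t).foldr dirD p = dirD v (t.foldr dirD p) := rfl
    have hfoldh : (v :: t).foldr hatD p = hatD v (t.foldr hatD p) := rfl
    have hzero : n < (v :: t).length → (v :: t).foldr dirD p = 0 := by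
      intro hn
      simp only [List.length_cons] at hn
      rw [hfold]
      rcases lt_or_eq_of_le (Nat.lt_succ_iff.mp hn) with h | h
      · rw [h2 h, dirD_zero]
      · have : (t.foldr dirD p).IsHomogeneous 0 := by
          rwa [h, Nat.sub_self] at h1
        exact dirD_eq_zero_of_isHomogeneous_zero this v
    refine ⟨?_, hzero, ?_⟩
    · rw [hfold]
      have := dirD_isHomogeneous h1 v
      rwa [Nat.sub_sub, ← List.length_cons (a := v)] at this
    · rw [hfoldh, hfold, h3, hatD_smul, hatD_of_isHomogeneous h1,
        List.length_cons, Nat.descFactorial_succ, Nat.cast_mul, mul_inv,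
        smul_smul, mul_comm]

private lemma foldr_dirD_sum {ι : Type*} (l : List (σ → k)) (s : Finset ι)
    (f : ι → MvPolynomial σ k) :
    l.foldr dirD (∑ i ∈ s, f i) = ∑ i ∈ s, l.foldr dirD (f i) := by
  induction l with
  | nil => rfl
  | cons v t ih =>
    show dirD v (t.foldr dirD (∑ i ∈ s, f i)) = _
    rw [ih]
    exact map_sum (AddMonoidHom.mk' (dirD v) (dirD_add v)) _ s

private lemma foldr_hatD_sum {ι : Type*} (l : List (σ → k)) (s : Finset ι)
    (f : ι → MvPolynomial σ k) :
    l.foldr hatD (∑ i ∈ s, f i) = ∑ i ∈ s, l.foldr hatD (f i) := by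
  induction l with
  | nil => rfl
  | cons v t ih =>
    show hatD v (t.foldr hatD (∑ i ∈ s, f i)) = _
    rw [ih]
    exact map_sum (AddMonoidHom.mk' (hatD v) (hatD_add v)) _ s

/-- Evaluating the `k`-fold iterated directional derivative at `0` equals `k!` times the
evaluation at `0` of the `k`-fold iterated corrected derivative:
`(∂_{v₁}⋯∂_{v_k} p)(0) = k! · (∂̂_{v₁}⋯∂̂_{v_k} p)(0)`. -/
theorem constantCoeff_iterated_dirD_eq_factorial_mul (l : List (σ → k)) (hl : l ≠ [])
    (p : MvPolynomial σ k) :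
    constantCoeff (l.foldr dirD p) =
      (Nat.factorial l.length : k) * constantCoeff (l.foldr hatD p) := by
  conv_lhs => rw [← sum_homogeneousComponent p]
  conv_rhs => rw [← sum_homogeneousComponent p]
  rw [foldr_dirD_sum, foldr_hatD_sum, map_sum, map_sum, Finset.mul_sum]
  apply Finset.sum_congr rfl
  intro n _
  have hq : (homogeneousComponent n p).IsHomogeneous n :=
    homogeneousComponent_isHomogeneous n p
  obtain ⟨h1, h2, h3⟩ := key_lemma l n (homogeneousComponent n p) hq
  rcases lt_trichotomy n l.length with h | h | h
  · rw [h2 h, h3, h2 h, smul_zero, map_zero, mul_zero]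
  · rw [h3, smul_eq_C_mul, map_mul, constantCoeff_C, h, Nat.descFactorial_self,
      ← mul_assoc, mul_inv_cancel₀ (by exact_mod_cast Nat.factorial_ne_zero l.length),
      one_mul]
  · have hcc : constantCoeff (l.foldr dirD (homogeneousComponent n p)) = 0 := by
      have : (0 : σ →₀ ℕ).degree ≠ n - l.length := by
        rw [map_zero]
        omega
      exact h1.coeff_eq_zero this
    rw [hcc, h3, smul_eq_C_mul, map_mul, constantCoeff_C, hcc, mul_zero, mul_zero]
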